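/- arXiv:2404.03828 — 7 statements merged into one kernel-verified Lean document; each statement's English description precedes it below -/
import Mathlib

section
/- For every x ∈ ℝ^d, the Outlier-Efficient Hopfield energy satisfies H(T(x)) ≤ H(x); consequently, for any sequence defined by x_{t+1} = T(x_t), the energy values H(x_t) are monotonically non-increasing in t. -/
open Real
open scoped BigOperators RealInnerProductSpace

/-- `Softmax₁`: for `z ∈ ℝ^M`, `[Softmax₁(z)]_ν = exp(z_ν)/(1 + ∑_μ exp(z_μ))`. -/
noncomputable def softmax1 {M : ℕ} (z : Fin M → ℝ) : Fin M → ℝ :=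
  fun ν => Real.exp (z ν) / (1 + ∑ μ, Real.exp (z μ))

lemma sum_exp_pos {M : ℕ} (c : Fin M → ℝ) : 0 < 1 + ∑ μ, Real.exp (c μ) := by
  have : (0:ℝ) ≤ ∑ μ, Real.exp (c μ) :=
    Finset.sum_nonneg fun μ _ => (Real.exp_pos _).le
  linarith

/-- Key convexity (subgradient) inequality for `lse₁`. -/
lemma jensen_key {M : ℕ} (c e : Fin M → ℝ) :
    ∑ μ, (Real.exp (c μ) / (1 + ∑ ν, Real.exp (c ν))) * (e μ - c μ)
      ≤ Real.log (1 + ∑ μ, Real.exp (e μ)) - Real.log (1 + ∑ μ, Real.exp (c μ)) := by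
  set Zc := 1 + ∑ ν, Real.exp (c ν) with hZc
  set Zd := 1 + ∑ ν, Real.exp (e ν) with hZd
  have hZcpos : 0 < Zc := sum_exp_pos c
  have hZdpos : 0 < Zd := sum_exp_pos e
  -- weights and values on Fin (M+1)
  set w : Fin (M + 1) → ℝ := Fin.cons (1 / Zc) (fun μ => Real.exp (c μ) / Zc) with hw
  set v : Fin (M + 1) → ℝ := Fin.cons 0 (fun μ => e μ - c μ) with hv
  have hw0 : ∀ i ∈ Finset.univ, 0 ≤ w i := by
    intro i _
    refine Fin.cases ?_ ?_ i <;> intros <;>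
      simp [hw, le_div_iff₀ hZcpos, (Real.exp_pos _).le, hZcpos.le]
  have hw1 : ∑ i, w i = 1 := by
    rw [hw, Fin.sum_univ_succ]
    simp only [Fin.cons_zero, Fin.cons_succ]
    rw [← Finset.sum_div]
    field_simp
    exact hZc.symm
  have hjensen := convexOn_exp.map_sum_le (t := Finset.univ) (p := v) hw0 hw1
    (fun i _ => Set.mem_univ _)
  simp only [smul_eq_mul] at hjensen
  have hsumv : ∑ i, w i * v i = ∑ μ, (Real.exp (c μ) / Zc) * (e μ - c μ) := by
    rw [hw, hv, Fin.sum_univ_succ]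
    simp
  have hsume : ∑ i, w i * Real.exp (v i) = Zd / Zc := by
    rw [hw, hv, Fin.sum_univ_succ]
    simp only [Fin.cons_zero, Fin.cons_succ, Real.exp_zero, mul_one]
    have : ∀ μ : Fin M, Real.exp (c μ) / Zc * Real.exp (e μ - c μ)
        = Real.exp (e μ) / Zc := by
      intro μ
      rw [Real.exp_sub, div_mul_div_comm, mul_comm,
        mul_div_mul_right _ _ (Real.exp_ne_zero (c μ))]
    rw [Finset.sum_congr rfl fun μ _ => this μ, ← Finset.sum_div, hZd]
    field_simp
  rw [hsumv, hsume] at hjensen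
  have hlog : ∑ μ, (Real.exp (c μ) / Zc) * (e μ - c μ) ≤ Real.log (Zd / Zc) :=
    (Real.le_log_iff_exp_le (div_pos hZdpos hZcpos)).2 hjensen
  rwa [Real.log_div hZdpos.ne' hZcpos.ne'] at hlog

/-- For every `x ∈ ℝ^d`, the Outlier-Efficient Hopfield energy
`H(x) = −lse₁(x) + (1/2)⟨x,x⟩` satisfies `H(T(x)) ≤ H(x)` for the retrieval dynamics
`T(x) = ∑_μ [Softmax₁(β Ξᵀ x)]_μ • ξ_μ`; consequently, for any sequence defined by
`x_{t+1} = T(x_t)`, the energy values `H(x_t)` are monotonically non-increasing in `t`. -/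
theorem stmt2 (d M : ℕ) (β : ℝ) (hβ : 0 < β)
    (ξ : Fin M → EuclideanSpace ℝ (Fin d))
    (H : EuclideanSpace ℝ (Fin d) → ℝ)
    (hH : ∀ x, H x = -(β⁻¹ * Real.log (1 + ∑ μ, Real.exp (β * ⟪ξ μ, x⟫)))
      + (1/2) * ⟪x, x⟫)
    (T : EuclideanSpace ℝ (Fin d) → EuclideanSpace ℝ (Fin d))
    (hT : ∀ x, T x = ∑ μ, softmax1 (fun ν => β * ⟪ξ ν, x⟫) μ • ξ μ) :
    (∀ x, H (T x) ≤ H x) ∧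
    ∀ xs : ℕ → EuclideanSpace ℝ (Fin d), (∀ t, xs (t + 1) = T (xs t)) →
      Antitone fun t => H (xs t) := by
  have main : ∀ x, H (T x) ≤ H x := by
    intro x
    set y := T x with hy
    set c : Fin M → ℝ := fun μ => β * ⟪ξ μ, x⟫ with hc
    set e : Fin M → ℝ := fun μ => β * ⟪ξ μ, y⟫ with he
    set Zc := 1 + ∑ ν, Real.exp (c ν) with hZc
    set Zd := 1 + ∑ ν, Real.exp (e ν) with hZd
    have hZcpos : 0 < Zc := sum_exp_pos c
    have hZdpos : 0 < Zd := sum_exp_pos e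
    -- inner product of T x with any v
    have hinner : ∀ v : EuclideanSpace ℝ (Fin d),
        ⟪y, v⟫ = ∑ μ, (Real.exp (c μ) / Zc) * ⟪ξ μ, v⟫ := by
      intro v
      rw [hy, hT x, sum_inner]
      refine Finset.sum_congr rfl fun μ _ => ?_
      rw [real_inner_smul_left]
      rfl
    have hkey := jensen_key c e
    have hsum : ∑ μ, (Real.exp (c μ) / Zc) * (e μ - c μ) = β * (⟪y, y⟫ - ⟪y, x⟫) := by
      rw [mul_sub, hinner y, hinner x, Finset.mul_sum, Finset.mul_sum,
        ← Finset.sum_sub_distrib]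
      refine Finset.sum_congr rfl fun μ _ => ?_
      simp only [hc, he]
      ring
    rw [hsum] at hkey
    -- so ⟪y,y⟫ - ⟪y,x⟫ ≤ β⁻¹ (log Zd - log Zc)
    have h1 : ⟪y, y⟫ - ⟪y, x⟫ ≤ β⁻¹ * (Real.log Zd - Real.log Zc) := by
      exact (le_inv_mul_iff₀ hβ).mpr hkey
    have hdist : (0:ℝ) ≤ ⟪y - x, y - x⟫ := real_inner_self_nonneg
    have hexp : ⟪y - x, y - x⟫ = ⟪y, y⟫ - 2 * ⟪y, x⟫ + ⟪x, x⟫ := by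
      rw [inner_sub_sub_self]
      rw [real_inner_comm x y]
      ring
    rw [hH y, hH x]
    have hby : β⁻¹ * Real.log Zd - β⁻¹ * Real.log Zc ≥ ⟪y, y⟫ - ⟪y, x⟫ := by
      rw [← mul_sub]; exact h1
    nlinarith [hdist, hexp]
  refine ⟨main, fun xs hxs => antitone_nat_of_succ_le fun t => ?_⟩
  show H (xs (t + 1)) ≤ H (xs t)
  rw [hxs t]
  exact main (xs t)
end

section
/- The Outlier-Efficient Hopfield energy H is differentiable on ℝ^d with gradient ∇H(x) = x − T(x) for every x ∈ ℝ^d; consequently, a point x is a fixed point of the retrieval dynamics T (i.e., T(x) = x) if and only if x is a stationary point of H (i.e., ∇H(x) = 0). -/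
open Real
open scoped BigOperators RealInnerProductSpace

/-- The Outlier-Efficient Hopfield energy `H` is differentiable on `ℝ^d` with gradient
`∇H(x) = x − T(x)` for every `x`; consequently, `x` is a fixed point of the retrieval
dynamics `T` (i.e. `T(x) = x`) iff `x` is a stationary point of `H` (i.e. `∇H(x) = 0`). -/
theorem stmt4 (d M : ℕ) (β : ℝ) (hβ : 0 < β)
    (ξ : Fin M → EuclideanSpace ℝ (Fin d))
    (H : EuclideanSpace ℝ (Fin d) → ℝ)
    (hH : ∀ x, H x = -(β⁻¹ * Real.log (1 + ∑ μ, Real.exp (β * ⟪ξ μ, x⟫)))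
      + (1/2) * ⟪x, x⟫)
    (T : EuclideanSpace ℝ (Fin d) → EuclideanSpace ℝ (Fin d))
    (hT : ∀ x, T x = ∑ μ, softmax1 (fun ν => β * ⟪ξ ν, x⟫) μ • ξ μ) :
    (∀ x, HasGradientAt H (x - T x) x) ∧
    ∀ x, T x = x ↔ gradient H x = 0 := by
  
  have key : ∀ x, HasGradientAt H (x - T x) x := by
    intro x
    rw [hasGradientAt_iff_hasFDerivAt]
    have hHfun : H = fun y : EuclideanSpace ℝ (Fin d) =>
        -(β⁻¹ * Real.log (1 + ∑ μ, Real.exp (β * ⟪ξ μ, y⟫))) + (1/2) * ⟪y, y⟫ :=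
      funext hH
    have hpos : (0:ℝ) < 1 + ∑ μ, Real.exp (β * ⟪ξ μ, x⟫) := by
      positivity
    have hne : (1 + ∑ μ, Real.exp (β * ⟪ξ μ, x⟫)) ≠ 0 := ne_of_gt hpos
    have hterm : ∀ μ : Fin M, HasFDerivAt
        (fun y : EuclideanSpace ℝ (Fin d) => Real.exp (β * ⟪ξ μ, y⟫))
        ((β * Real.exp (β * ⟪ξ μ, x⟫)) • (innerSL ℝ (ξ μ))) x := by
      intro μ
      have h1 : HasFDerivAt (fun y : EuclideanSpace ℝ (Fin d) => ⟪ξ μ, y⟫)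
          (innerSL ℝ (ξ μ)) x := (innerSL ℝ (ξ μ)).hasFDerivAt
      have h2 := (h1.const_mul β).exp
      rw [smul_smul, mul_comm (Real.exp _) β] at h2
      exact h2
    have hS : HasFDerivAt
        (fun y : EuclideanSpace ℝ (Fin d) => 1 + ∑ μ, Real.exp (β * ⟪ξ μ, y⟫))
        (∑ μ, (β * Real.exp (β * ⟪ξ μ, x⟫)) • (innerSL ℝ (ξ μ))) x := by
      exact (HasFDerivAt.fun_sum (u := Finset.univ) (fun μ _ => hterm μ)).const_add 1
    have hlog := hS.log hne
    have hmul := hlog.const_mul β⁻¹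
    have hneg := hmul.neg
    have hq : HasFDerivAt (fun y : EuclideanSpace ℝ (Fin d) => (1/2 : ℝ) * ⟪y, y⟫)
        (innerSL ℝ x) x := by
      have h1 : HasFDerivAt (fun y : EuclideanSpace ℝ (Fin d) => ⟪y, y⟫)
          (innerSL ℝ x + innerSL ℝ x) x := by
        have := (hasFDerivAt_id x).inner ℝ (hasFDerivAt_id x)
        refine this.congr_fderiv ?_
        ext y
        simp [fderivInnerCLM_apply, real_inner_comm]
      have h2 := h1.const_mul (1/2 : ℝ)
      refine h2.congr_fderiv ?_
      ext y
      simp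
      ring
    have htot := hneg.add hq
    rw [hHfun]
    refine htot.congr_fderiv ?_
    ext y
    simp only [InnerProductSpace.toDual_apply_apply, ContinuousLinearMap.add_apply,
      ContinuousLinearMap.neg_apply, ContinuousLinearMap.smul_apply,
      ContinuousLinearMap.coe_sum', Finset.sum_apply,
      innerSL_apply_apply, smul_eq_mul, hT, inner_sub_left, sum_inner, real_inner_smul_left,
      softmax1]
    have hsum : (∑ μ, Real.exp (β * ⟪ξ μ, x⟫) / (1 + ∑ ν, Real.exp (β * ⟪ξ ν, x⟫)) * ⟪ξ μ, y⟫)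
        = β⁻¹ * ((1 + ∑ ν, Real.exp (β * ⟪ξ ν, x⟫))⁻¹ *
            ∑ μ, (β * Real.exp (β * ⟪ξ μ, x⟫)) * ⟪ξ μ, y⟫) := by
      rw [Finset.mul_sum, Finset.mul_sum]
      refine Finset.sum_congr rfl fun μ _ => ?_
      field_simp
    rw [hsum]
    ring
  refine ⟨key, fun x => ?_⟩
  rw [(key x).gradient]
  constructor
  · intro h; rw [h]; simp
  · intro h; exact (sub_eq_zero.mp h).symm
end

section
/- Let (x_t)_{t ≥ 0} be any sequence in ℝ^d defined by the iteration x_{t+1} = T(x_t). Then the energy sequence H(x_t) converges, ‖x_{t+1} − x_t‖ → 0 as t → ∞, and every limit point x* of the sequence (x_t) is a fixed point of T (equivalently, a stationary point of H, i.e., ∇H(x*) = 0). -/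
open Real Filter Topology
open scoped BigOperators RealInnerProductSpace

open Finset

/-- 1-D log-sum-exp convexity inequality via MVT + monotone derivative. -/
lemma lse1d {M : ℕ} (a b : Fin M → ℝ) :
    (∑ μ, b μ * Real.exp (a μ)) / (1 + ∑ μ, Real.exp (a μ)) ≤
      Real.log (1 + ∑ μ, Real.exp (a μ + b μ)) - Real.log (1 + ∑ μ, Real.exp (a μ)) := by
  set g : ℝ → ℝ := fun s => 1 + ∑ μ, Real.exp (a μ + s * b μ) with hgdef
  set N : ℝ → ℝ := fun s => ∑ μ, b μ * Real.exp (a μ + s * b μ) with hNdef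
  set N2 : ℝ → ℝ := fun s => ∑ μ, b μ * (b μ * Real.exp (a μ + s * b μ)) with hN2def
  have hgpos : ∀ s, 0 < g s := by
    intro s
    have : (0:ℝ) ≤ ∑ μ, Real.exp (a μ + s * b μ) :=
      Finset.sum_nonneg fun μ _ => (Real.exp_pos _).le
    simp only [hgdef]; linarith
  have hlin : ∀ (μ : Fin M) (s : ℝ), HasDerivAt (fun s => a μ + s * b μ) (b μ) s := by
    intro μ s
    simpa using ((hasDerivAt_id s).mul_const (b μ)).const_add (a μ)
  have hg : ∀ s, HasDerivAt g (N s) s := by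
    intro s
    have : HasDerivAt (fun s => ∑ μ, Real.exp (a μ + s * b μ))
        (∑ μ : Fin M, Real.exp (a μ + s * b μ) * b μ) s :=
      HasDerivAt.fun_sum fun μ _ => (hlin μ s).exp
    have h2 := this.const_add (1:ℝ)
    simpa [hNdef, hgdef, mul_comm] using h2
  have hN : ∀ s, HasDerivAt N (N2 s) s := by
    intro s
    have : HasDerivAt (fun s => ∑ μ, b μ * Real.exp (a μ + s * b μ))
        (∑ μ : Fin M, b μ * (Real.exp (a μ + s * b μ) * b μ)) s :=
      HasDerivAt.fun_sum fun μ _ => ((hlin μ s).exp).const_mul (b μ)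
    simpa [hN2def, mul_comm, mul_left_comm] using this
  set F : ℝ → ℝ := fun s => N s / g s with hFdef
  have hF : ∀ s, HasDerivAt F ((N2 s * g s - N s * N s) / (g s)^2) s := by
    intro s
    exact (hN s).div (hg s) (hgpos s).ne'
  -- Cauchy-Schwarz: N s ^ 2 ≤ N2 s * g s
  have hCS : ∀ s, N s * N s ≤ N2 s * g s := by
    intro s
    have key : (∑ μ, Real.sqrt (Real.exp (a μ + s * b μ)) *
          (b μ * Real.sqrt (Real.exp (a μ + s * b μ)))) ^ 2 ≤
        (∑ μ, Real.sqrt (Real.exp (a μ + s * b μ)) ^ 2) *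
          ∑ μ, (b μ * Real.sqrt (Real.exp (a μ + s * b μ))) ^ 2 :=
      Finset.sum_mul_sq_le_sq_mul_sq _ _ _
    have e1 : ∀ μ : Fin M, Real.sqrt (Real.exp (a μ + s * b μ)) *
        (b μ * Real.sqrt (Real.exp (a μ + s * b μ))) = b μ * Real.exp (a μ + s * b μ) := by
      intro μ
      rw [mul_left_comm, Real.mul_self_sqrt (Real.exp_nonneg (a μ + s * b μ))]
    have e2 : ∀ μ : Fin M, Real.sqrt (Real.exp (a μ + s * b μ)) ^ 2 =
        Real.exp (a μ + s * b μ) := fun μ => Real.sq_sqrt (Real.exp_nonneg _)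
    have e3 : ∀ μ : Fin M, (b μ * Real.sqrt (Real.exp (a μ + s * b μ))) ^ 2 =
        b μ * (b μ * Real.exp (a μ + s * b μ)) := by
      intro μ
      rw [mul_pow, Real.sq_sqrt (Real.exp_nonneg _)]; ring
    rw [Finset.sum_congr rfl fun μ _ => e1 μ, Finset.sum_congr rfl fun μ _ => e2 μ,
      Finset.sum_congr rfl fun μ _ => e3 μ] at key
    have hsum_le : (∑ μ, Real.exp (a μ + s * b μ)) ≤ g s := by
      simp only [hgdef]; linarith
    have hN2nn : 0 ≤ N2 s := by
      apply Finset.sum_nonneg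
      intro μ _
      have : 0 ≤ b μ * b μ := mul_self_nonneg _
      nlinarith [Real.exp_pos (a μ + s * b μ)]
    calc N s * N s = (N s) ^ 2 := (sq (N s)).symm
      _ ≤ (∑ μ, Real.exp (a μ + s * b μ)) * N2 s := by
          simpa [hNdef, hN2def] using key
      _ ≤ g s * N2 s := mul_le_mul_of_nonneg_right hsum_le hN2nn
      _ = N2 s * g s := mul_comm _ _
  have hmono : Monotone F := by
    apply monotone_of_deriv_nonneg
    · exact fun s => (hF s).differentiableAt
    · intro s
      rw [(hF s).deriv]
      apply div_nonneg _ (sq_nonneg _)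
      linarith [hCS s]
  -- MVT
  set f : ℝ → ℝ := fun s => Real.log (g s) with hfdef
  have hf : ∀ s, HasDerivAt f (F s) s := fun s => (hg s).log (hgpos s).ne'
  obtain ⟨c, hc, hceq⟩ := exists_hasDerivAt_eq_slope f F one_pos
    (fun s _ => (hf s).continuousAt.continuousWithinAt) (fun s _ => hf s)
  have hF0 : F 0 ≤ F c := hmono hc.1.le
  have : f 1 - f 0 = F c := by
    rw [hceq]; ring
  have hfin : F 0 ≤ f 1 - f 0 := by rw [this]; exact hF0
  have h0 : f 0 = Real.log (1 + ∑ μ, Real.exp (a μ)) := by simp [hfdef, hgdef]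
  have h1 : f 1 = Real.log (1 + ∑ μ, Real.exp (a μ + b μ)) := by simp [hfdef, hgdef]
  have hF0v : F 0 = (∑ μ, b μ * Real.exp (a μ)) / (1 + ∑ μ, Real.exp (a μ)) := by
    simp [hFdef, hNdef, hgdef]
  rw [h0, h1, hF0v] at hfin
  exact hfin

lemma key_ineq {d M : ℕ} (β : ℝ) (hβ : 0 < β) (ξ : Fin M → EuclideanSpace ℝ (Fin d))
    (x y : EuclideanSpace ℝ (Fin d)) :
    ⟪(∑ μ, softmax1 (fun ν => β * ⟪ξ ν, x⟫) μ • ξ μ : EuclideanSpace ℝ (Fin d)), y - x⟫ ≤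
      β⁻¹ * Real.log (1 + ∑ μ, Real.exp (β * ⟪ξ μ, y⟫))
        - β⁻¹ * Real.log (1 + ∑ μ, Real.exp (β * ⟪ξ μ, x⟫)) := by
  set a : Fin M → ℝ := fun μ => β * ⟪ξ μ, x⟫ with hadef
  set b : Fin M → ℝ := fun μ => β * ⟪ξ μ, y - x⟫ with hbdef
  have hab : ∀ μ, a μ + b μ = β * ⟪ξ μ, y⟫ := by
    intro μ; simp only [hadef, hbdef, inner_sub_right]; ring
  have h1 := lse1d a b
  simp only [hab] at h1
  have hLHS : ⟪(∑ μ, softmax1 a μ • ξ μ : EuclideanSpace ℝ (Fin d)), y - x⟫ =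
      β⁻¹ * ((∑ μ, b μ * Real.exp (a μ)) / (1 + ∑ μ, Real.exp (a μ))) := by
    have scal : ∀ e gg c : ℝ, e / gg * c = β⁻¹ * (β * c * e / gg) := by
      intro e gg c
      rcases eq_or_ne gg 0 with h | h
      · simp [h]
      · field_simp
    rw [sum_inner, Finset.sum_div, Finset.mul_sum]
    apply Finset.sum_congr rfl
    intro μ _
    rw [real_inner_smul_left]
    simp only [softmax1, hbdef]
    exact scal _ _ _
  rw [hLHS]
  have hβinv : (0:ℝ) ≤ β⁻¹ := (inv_pos.mpr hβ).le
  have := mul_le_mul_of_nonneg_left h1 hβinv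
  linarith [this]

lemma descent {d M : ℕ} (β : ℝ) (hβ : 0 < β) (ξ : Fin M → EuclideanSpace ℝ (Fin d))
    (x y : EuclideanSpace ℝ (Fin d))
    (hy : y = ∑ μ, softmax1 (fun ν => β * ⟪ξ ν, x⟫) μ • ξ μ) :
    -(β⁻¹ * Real.log (1 + ∑ μ, Real.exp (β * ⟪ξ μ, y⟫))) + (1/2) * ⟪y, y⟫ ≤
      (-(β⁻¹ * Real.log (1 + ∑ μ, Real.exp (β * ⟪ξ μ, x⟫))) + (1/2) * ⟪x, x⟫)
        - (1/2) * ‖y - x‖^2 := by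
  have hk := key_ineq β hβ ξ x y
  rw [← hy] at hk
  have hexp : ‖y - x‖^2 = ⟪y,y⟫ - 2 * ⟪y,x⟫ + ⟪x,x⟫ := by
    rw [← real_inner_self_eq_norm_sq]
    rw [inner_sub_left, inner_sub_right, inner_sub_right, real_inner_comm x y]
    ring
  have hyx : ⟪y, y - x⟫ = ⟪y,y⟫ - ⟪y,x⟫ := by rw [inner_sub_right]
  rw [hyx] at hk
  linarith

lemma lowbd {d M : ℕ} (β : ℝ) (hβ : 0 < β) (ξ : Fin M → EuclideanSpace ℝ (Fin d))
    (x : EuclideanSpace ℝ (Fin d)) :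
    -(β⁻¹ * Real.log (1 + M)) - (∑ μ, ‖ξ μ‖)^2/2 ≤
      -(β⁻¹ * Real.log (1 + ∑ μ, Real.exp (β * ⟪ξ μ, x⟫))) + (1/2) * ⟪x, x⟫ := by
  set C : ℝ := ∑ μ, ‖ξ μ‖ with hC
  have hCnn : 0 ≤ C := Finset.sum_nonneg fun μ _ => norm_nonneg _
  have hterm : ∀ μ : Fin M, Real.exp (β * ⟪ξ μ, x⟫) ≤ Real.exp (β * (C * ‖x‖)) := by
    intro μ
    apply Real.exp_le_exp.mpr
    apply mul_le_mul_of_nonneg_left _ hβ.le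
    calc ⟪ξ μ, x⟫ ≤ ‖ξ μ‖ * ‖x‖ := real_inner_le_norm _ _
      _ ≤ C * ‖x‖ := by
          apply mul_le_mul_of_nonneg_right _ (norm_nonneg _)
          exact Finset.single_le_sum (fun ν _ => norm_nonneg (ξ ν)) (Finset.mem_univ μ)
  have hsum : (1 + ∑ μ, Real.exp (β * ⟪ξ μ, x⟫)) ≤ (1 + M) * Real.exp (β * (C * ‖x‖)) := by
    have h1 : (1:ℝ) ≤ Real.exp (β * (C * ‖x‖)) := by
      rw [Real.one_le_exp_iff]
      positivity
    have h2 : (∑ μ, Real.exp (β * ⟪ξ μ, x⟫)) ≤ M * Real.exp (β * (C * ‖x‖)) := by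
      calc (∑ μ : Fin M, Real.exp (β * ⟪ξ μ, x⟫)) ≤ ∑ μ : Fin M, Real.exp (β * (C * ‖x‖)) :=
            Finset.sum_le_sum fun μ _ => hterm μ
        _ = M * Real.exp (β * (C * ‖x‖)) := by simp [Finset.sum_const, nsmul_eq_mul]
    nlinarith
  have hpos : (0:ℝ) < 1 + ∑ μ, Real.exp (β * ⟪ξ μ, x⟫) := by
    have : (0:ℝ) ≤ ∑ μ, Real.exp (β * ⟪ξ μ, x⟫) :=
      Finset.sum_nonneg fun μ _ => (Real.exp_pos _).le
    linarith
  have hlog : Real.log (1 + ∑ μ, Real.exp (β * ⟪ξ μ, x⟫)) ≤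
      Real.log (1 + M) + β * (C * ‖x‖) := by
    calc Real.log (1 + ∑ μ, Real.exp (β * ⟪ξ μ, x⟫))
        ≤ Real.log ((1 + M) * Real.exp (β * (C * ‖x‖))) := Real.log_le_log hpos hsum
      _ = Real.log (1 + M) + β * (C * ‖x‖) := by
          rw [Real.log_mul (by positivity) (Real.exp_ne_zero _), Real.log_exp]
  have hmul : β⁻¹ * Real.log (1 + ∑ μ, Real.exp (β * ⟪ξ μ, x⟫)) ≤
      β⁻¹ * Real.log (1 + M) + C * ‖x‖ := by
    have := mul_le_mul_of_nonneg_left hlog (inv_pos.mpr hβ).le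
    have hb : β⁻¹ * (β * (C * ‖x‖)) = C * ‖x‖ := by
      field_simp
    nlinarith [this]
  have hinner : ⟪x, x⟫ = ‖x‖^2 := real_inner_self_eq_norm_sq x
  nlinarith [sq_nonneg (‖x‖ - C)]

open InnerProductSpace in
set_option maxHeartbeats 1000000 in
lemma gradH {d M : ℕ} (β : ℝ) (hβ : 0 < β) (ξ : Fin M → EuclideanSpace ℝ (Fin d))
    (x : EuclideanSpace ℝ (Fin d)) :
    HasGradientAt
      (fun y => -(β⁻¹ * Real.log (1 + ∑ μ, Real.exp (β * ⟪ξ μ, y⟫))) + (1/2) * ⟪y, y⟫)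
      (x - ∑ μ, softmax1 (fun ν => β * ⟪ξ ν, x⟫) μ • ξ μ) x := by
  have hgpos : (0:ℝ) < 1 + ∑ μ, Real.exp (β * ⟪ξ μ, x⟫) := by
    have : (0:ℝ) ≤ ∑ μ, Real.exp (β * ⟪ξ μ, x⟫) :=
      Finset.sum_nonneg fun μ _ => (Real.exp_pos _).le
    linarith
  have hinner : ∀ μ : Fin M, HasFDerivAt (fun y : EuclideanSpace ℝ (Fin d) => ⟪ξ μ, y⟫) (innerSL ℝ (ξ μ)) x :=
    fun μ => (innerSL ℝ (ξ μ)).hasFDerivAt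
  have hexp : ∀ μ : Fin M, HasFDerivAt (fun y : EuclideanSpace ℝ (Fin d) => Real.exp (β * ⟪ξ μ, y⟫))
      (Real.exp (β * ⟪ξ μ, x⟫) • (β • innerSL ℝ (ξ μ))) x :=
    fun μ => ((hinner μ).const_mul β).exp
  have hsum : HasFDerivAt (fun y : EuclideanSpace ℝ (Fin d) => 1 + ∑ μ, Real.exp (β * ⟪ξ μ, y⟫))
      (∑ μ, Real.exp (β * ⟪ξ μ, x⟫) • (β • innerSL ℝ (ξ μ))) x :=
    (HasFDerivAt.fun_sum fun μ _ => hexp μ).const_add 1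
  have hlog := ((hsum.log hgpos.ne').const_mul β⁻¹).neg
  have hquad := (((hasFDerivAt_id x).inner ℝ (hasFDerivAt_id x)).const_mul ((1:ℝ)/2))
  have htot := hlog.add hquad
  simp only [id_eq] at htot
  rw [hasGradientAt_iff_hasFDerivAt]
  refine HasFDerivAt.congr_fderiv htot ?_
  apply ContinuousLinearMap.ext
  intro u
  simp only [ContinuousLinearMap.add_apply, ContinuousLinearMap.neg_apply,
    ContinuousLinearMap.smul_apply, ContinuousLinearMap.coe_sum', Finset.sum_apply,
    ContinuousLinearMap.coe_comp', Function.comp_apply, ContinuousLinearMap.prod_apply,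
    ContinuousLinearMap.coe_id', id_eq, fderivInnerCLM_apply, innerSL_apply_apply,
    toDual_apply_apply, smul_eq_mul]
  rw [inner_sub_left, sum_inner]
  simp only [real_inner_smul_left, softmax1]
  rw [real_inner_comm u x]
  have hg : (1 + ∑ μ, Real.exp (β * ⟪ξ μ, x⟫)) ≠ 0 := hgpos.ne'
  rw [Finset.mul_sum, Finset.mul_sum]
  have hterm : ∀ μ : Fin M,
      Real.exp (β * ⟪ξ μ, x⟫) / (1 + ∑ ν, Real.exp (β * ⟪ξ ν, x⟫)) * ⟪ξ μ, u⟫ =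
      β⁻¹ * ((1 + ∑ ν, Real.exp (β * ⟪ξ ν, x⟫))⁻¹ *
        (Real.exp (β * ⟪ξ μ, x⟫) * (β * ⟪ξ μ, u⟫))) := by
    intro μ
    field_simp
  rw [Finset.sum_congr rfl fun μ _ => hterm μ]
  ring

/-- Let `(x_t)` be any sequence with `x_{t+1} = T(x_t)`. Then the energy sequence
`H(x_t)` converges, `‖x_{t+1} − x_t‖ → 0`, and every limit point `x*` of `(x_t)` is a
fixed point of `T` (equivalently a stationary point of `H`, i.e. `∇H(x*) = 0`). -/
theorem stmt5 (d M : ℕ) (β : ℝ) (hβ : 0 < β)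
    (ξ : Fin M → EuclideanSpace ℝ (Fin d))
    (H : EuclideanSpace ℝ (Fin d) → ℝ)
    (hH : ∀ x, H x = -(β⁻¹ * Real.log (1 + ∑ μ, Real.exp (β * ⟪ξ μ, x⟫)))
      + (1/2) * ⟪x, x⟫)
    (T : EuclideanSpace ℝ (Fin d) → EuclideanSpace ℝ (Fin d))
    (hT : ∀ x, T x = ∑ μ, softmax1 (fun ν => β * ⟪ξ ν, x⟫) μ • ξ μ)
    (xs : ℕ → EuclideanSpace ℝ (Fin d))
    (hxs : ∀ t, xs (t + 1) = T (xs t)) :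
    (∃ L : ℝ, Tendsto (fun t => H (xs t)) atTop (𝓝 L)) ∧
    Tendsto (fun t => ‖xs (t + 1) - xs t‖) atTop (𝓝 0) ∧
    ∀ xstar : EuclideanSpace ℝ (Fin d), MapClusterPt xstar atTop xs →
      T xstar = xstar ∧ gradient H xstar = 0 := by
  have hdes : ∀ t, H (xs (t+1)) ≤ H (xs t) - (1/2) * ‖xs (t+1) - xs t‖^2 := by
    intro t
    rw [hxs t, hH (T (xs t)), hH (xs t)]
    exact descent β hβ ξ (xs t) (T (xs t)) (hT (xs t))
  have hmono : ∀ t, H (xs (t+1)) ≤ H (xs t) := by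
    intro t
    have := hdes t
    nlinarith [sq_nonneg ‖xs (t+1) - xs t‖]
  have hbdd : ∀ t, -(β⁻¹ * Real.log (1 + M)) - (∑ μ, ‖ξ μ‖)^2/2 ≤ H (xs t) := by
    intro t
    rw [hH (xs t)]
    exact lowbd β hβ ξ (xs t)
  have hant : Antitone (fun t => H (xs t)) := antitone_nat_of_succ_le hmono
  have hbddBelow : BddBelow (Set.range fun t => H (xs t)) := by
    refine ⟨-(β⁻¹ * Real.log (1 + M)) - (∑ μ, ‖ξ μ‖)^2/2, ?_⟩
    rintro y ⟨t, rfl⟩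
    exact hbdd t
  have hL : Tendsto (fun t => H (xs t)) atTop (𝓝 (⨅ t, H (xs t))) :=
    tendsto_atTop_ciInf hant hbddBelow
  have hL1 : Tendsto (fun t => H (xs (t+1))) atTop (𝓝 (⨅ t, H (xs t))) :=
    hL.comp (tendsto_add_atTop_nat 1)
  have hdiffL : Tendsto (fun t => 2 * (H (xs t) - H (xs (t+1)))) atTop (𝓝 0) := by
    have h := (hL.sub hL1).const_mul (2:ℝ)
    simpa using h
  have hsq : Tendsto (fun t => ‖xs (t+1) - xs t‖^2) atTop (𝓝 0) := by
    apply squeeze_zero (fun t => sq_nonneg _) (fun t => ?_) hdiffL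
    have := hdes t
    linarith
  have hnorm : Tendsto (fun t => ‖xs (t+1) - xs t‖) atTop (𝓝 0) := by
    have h := (Real.continuous_sqrt.tendsto' 0 0 Real.sqrt_zero).comp hsq
    have heq : ((fun x => Real.sqrt x) ∘ fun t => ‖xs (t+1) - xs t‖^2)
        = fun t => ‖xs (t+1) - xs t‖ := by
      funext t
      exact Real.sqrt_sq (norm_nonneg _)
    rwa [heq] at h
  refine ⟨⟨_, hL⟩, hnorm, ?_⟩
  intro xstar hcl
  obtain ⟨φ, hφ, hφt⟩ := TopologicalSpace.FirstCountableTopology.tendsto_subseq hcl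
  have hgpos : ∀ x : EuclideanSpace ℝ (Fin d),
      (0:ℝ) < 1 + ∑ μ, Real.exp (β * ⟪ξ μ, x⟫) := by
    intro x
    have : (0:ℝ) ≤ ∑ μ, Real.exp (β * ⟪ξ μ, x⟫) :=
      Finset.sum_nonneg fun μ _ => (Real.exp_pos _).le
    linarith
  have hTcont : Continuous T := by
    have hTfun : T = fun x => ∑ μ, softmax1 (fun ν => β * ⟪ξ ν, x⟫) μ • ξ μ := funext hT
    rw [hTfun]
    apply continuous_finset_sum
    intro μ _
    apply Continuous.smul (f := fun a => softmax1 (fun ν => β * ⟪ξ ν, a⟫) μ) (g := fun _ => ξ μ) _ continuous_const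
    simp only [softmax1]
    apply Continuous.div
    · exact Real.continuous_exp.comp (continuous_const.mul (innerSL ℝ (ξ μ)).continuous)
    · exact continuous_const.add (continuous_finset_sum _ fun ν _ =>
        Real.continuous_exp.comp (continuous_const.mul (innerSL ℝ (ξ ν)).continuous))
    · exact fun x => (hgpos x).ne'
  have h1 : Tendsto (fun k => xs (φ k)) atTop (𝓝 xstar) := hφt
  have hd0 : Tendsto (fun t => xs (t+1) - xs t) atTop (𝓝 0) :=
    tendsto_zero_iff_norm_tendsto_zero.mpr hnorm
  have h2 : Tendsto (fun k => xs (φ k + 1) - xs (φ k)) atTop (𝓝 0) :=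
    hd0.comp hφ.tendsto_atTop
  have h3 : Tendsto (fun k => xs (φ k + 1)) atTop (𝓝 xstar) := by
    have h := h1.add h2
    simpa using h
  have h4 : Tendsto (fun k => xs (φ k + 1)) atTop (𝓝 (T xstar)) := by
    have h := (hTcont.tendsto xstar).comp h1
    have heq : (T ∘ fun k => xs (φ k)) = fun k => xs (φ k + 1) := by
      funext k
      exact (hxs (φ k)).symm
    rwa [heq] at h
  have hfix : T xstar = xstar := tendsto_nhds_unique h4 h3
  refine ⟨hfix, ?_⟩
  have hg : HasGradientAt H (xstar - T xstar) xstar := by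
    have hgr := gradH β hβ ξ xstar
    have hHfun : H = fun y => -(β⁻¹ * Real.log (1 + ∑ μ, Real.exp (β * ⟪ξ μ, y⟫)))
        + (1/2) * ⟪y, y⟫ := funext hH
    rw [hHfun, hT xstar]
    exact hgr
  rw [hg.gradient, hfix, sub_self]
end

section
/- Fix β > 0, a query x ∈ ℝ^d, memory patterns ξ_1, …, ξ_M ∈ ℝ^d arranged as columns of Ξ, and an index μ ∈ [M]. Let T_original(x) = Ξ · Softmax(β Ξᵀ x) and T_OutEff(x) = Ξ · Softmax₁(β Ξᵀ x), and let γ := ∑_{ν=1}^M [Softmax₁(β Ξᵀ x)]_ν. Assume that T_original(x) and ξ_μ are unit vectors (‖T_original(x)‖ = ‖ξ_μ‖ = 1). If (γ + 1)/2 ≥ ⟨T_original(x), ξ_μ⟩, then ‖T_OutEff(x) − ξ_μ‖ ≤ ‖T_original(x) − ξ_μ‖. -/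
open Real
open scoped BigOperators RealInnerProductSpace

/-- `Softmax`: for `z ∈ ℝ^M`, `[Softmax(z)]_ν = exp(z_ν)/∑_μ exp(z_μ)`. -/
noncomputable def softmax {M : ℕ} (z : Fin M → ℝ) : Fin M → ℝ :=
  fun ν => Real.exp (z ν) / (∑ μ, Real.exp (z μ))

/-- Let `T_original(x) = Ξ·Softmax(β Ξᵀ x)` and `T_OutEff(x) = Ξ·Softmax₁(β Ξᵀ x)`,
`γ = ∑_ν [Softmax₁(β Ξᵀ x)]_ν`. If `T_original(x)` and `ξ_μ` are unit vectors and
`(γ + 1)/2 ≥ ⟨T_original(x), ξ_μ⟩`, then `‖T_OutEff(x) − ξ_μ‖ ≤ ‖T_original(x) − ξ_μ‖`. -/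
theorem stmt11 (d M : ℕ) (β : ℝ) (hβ : 0 < β)
    (x : EuclideanSpace ℝ (Fin d))
    (ξ : Fin M → EuclideanSpace ℝ (Fin d)) (μ : Fin M)
    (Torig TOut : EuclideanSpace ℝ (Fin d)) (γ : ℝ)
    (hTorig : Torig = ∑ ν, softmax (fun ρ => β * ⟪ξ ρ, x⟫) ν • ξ ν)
    (hTOut : TOut = ∑ ν, softmax1 (fun ρ => β * ⟪ξ ρ, x⟫) ν • ξ ν)
    (hγ : γ = ∑ ν, softmax1 (fun ρ => β * ⟪ξ ρ, x⟫) ν)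
    (hTorig_unit : ‖Torig‖ = 1) (hξμ_unit : ‖ξ μ‖ = 1)
    (hcos : (γ + 1) / 2 ≥ ⟪Torig, ξ μ⟫) :
    ‖TOut - ξ μ‖ ≤ ‖Torig - ξ μ‖ := by
  rcases Nat.eq_zero_or_pos M with hM | hM
  · subst hM
    simp [Finset.sum_empty] at hTorig
    rw [hTorig] at hTorig_unit
    simp at hTorig_unit
  · have : Nonempty (Fin M) := ⟨⟨0, hM⟩⟩
    set z : Fin M → ℝ := fun ρ => β * ⟪ξ ρ, x⟫ with hz
    set S : ℝ := ∑ ν, Real.exp (z ν) with hS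
    have hSpos : 0 < S := Finset.sum_pos (fun i _ => Real.exp_pos _) Finset.univ_nonempty
    have hS1 : 0 < 1 + S := by linarith
    have hγval : γ = S / (1 + S) := by
      rw [hγ]
      simp only [softmax1, ← Finset.sum_div]
      rfl
    have hγle : γ ≤ 1 := by
      rw [hγval]; rw [div_le_one hS1]; linarith
    have hfac : ∀ ν, softmax1 z ν = γ * softmax z ν := by
      intro ν
      simp only [softmax1, softmax, hγval, ← hS]
      field_simp
    have hTOut' : TOut = γ • Torig := by
      rw [hTOut, hTorig, Finset.smul_sum]
      exact Finset.sum_congr rfl (fun ν _ => by rw [hfac ν, smul_smul])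
    set c : ℝ := ⟪Torig, ξ μ⟫ with hc
    have hγnn : 0 ≤ γ := by rw [hγval]; positivity
    have h1 : ‖TOut - ξ μ‖ ^ 2 = γ ^ 2 - 2 * γ * c + 1 := by
      rw [hTOut', norm_sub_sq_real, norm_smul, real_inner_smul_left, hTorig_unit, hξμ_unit,
        Real.norm_eq_abs, abs_of_nonneg hγnn, ← hc]
      ring
    have h2 : ‖Torig - ξ μ‖ ^ 2 = 2 - 2 * c := by
      rw [norm_sub_sq_real, hTorig_unit, hξμ_unit, ← hc]; ring
    have hsq : ‖TOut - ξ μ‖ ^ 2 ≤ ‖Torig - ξ μ‖ ^ 2 := by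
      rw [h1, h2]
      nlinarith [hγle, hcos]
    nlinarith [norm_nonneg (TOut - ξ μ), norm_nonneg (Torig - ξ μ), hsq]
end

section
/- For every x ∈ ℝ^M, writing s = Softmax₁(x), the entrywise ℓ_{1,1} norm of the Jacobian of Softmax₁ at x is at most 2; that is, ∑_{i=1}^M ∑_{j=1}^M |s_i · (δ_{ij} − s_j)| ≤ 2, where δ_{ij} is the Kronecker delta. -/
open Real
open scoped BigOperators

/-- For every `x ∈ ℝ^M`, writing `s = Softmax₁(x)`, the entrywise `ℓ_{1,1}` norm of the
Jacobian of `Softmax₁` at `x` is at most `2`: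
`∑_i ∑_j |s_i (δ_{ij} − s_j)| ≤ 2`. -/
theorem stmt14 (M : ℕ) (x : Fin M → ℝ) :
    ∑ i : Fin M, ∑ j : Fin M,
      |softmax1 x i * ((if i = j then (1 : ℝ) else 0) - softmax1 x j)| ≤ 2 := by
  set s := softmax1 x with hs
  have hEpos : (0:ℝ) < 1 + ∑ μ, Real.exp (x μ) := by
    have : (0:ℝ) ≤ ∑ μ, Real.exp (x μ) :=
      Finset.sum_nonneg fun μ _ => (Real.exp_pos _).le
    linarith
  have hnonneg : ∀ i, 0 ≤ s i := fun i =>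
    div_nonneg (Real.exp_pos _).le hEpos.le
  have hsum : ∑ i, s i ≤ 1 := by
    rw [hs]
    simp only [softmax1]
    rw [← Finset.sum_div]
    rw [div_le_one hEpos]
    linarith
  have hle1 : ∀ j, s j ≤ 1 := fun j =>
    le_trans (Finset.single_le_sum (fun i _ => hnonneg i) (Finset.mem_univ j)) hsum
  calc ∑ i : Fin M, ∑ j : Fin M,
      |s i * ((if i = j then (1 : ℝ) else 0) - s j)|
      ≤ ∑ i : Fin M, s i * 2 := by
        apply Finset.sum_le_sum
        intro i _
        have hrow : ∀ j : Fin M,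
            |s i * ((if i = j then (1 : ℝ) else 0) - s j)|
              = s i * |(if i = j then (1 : ℝ) else 0) - s j| := by
          intro j
          rw [abs_mul, abs_of_nonneg (hnonneg i)]
        simp only [hrow]
        rw [← Finset.mul_sum]
        apply mul_le_mul_of_nonneg_left _ (hnonneg i)
        have : ∑ j : Fin M, |(if i = j then (1:ℝ) else 0) - s j|
            ≤ ∑ j : Fin M, ((if i = j then (1:ℝ) else 0) + s j) := by
          apply Finset.sum_le_sum
          intro j _
          by_cases h : i = j
          · simp [h, abs_of_nonneg, abs_sub_le_iff]
            constructor <;> [linarith [hnonneg j]; linarith [hle1 j]]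
          · simp [h, abs_of_nonneg (hnonneg j)]
        refine this.trans ?_
        rw [Finset.sum_add_distrib, Finset.sum_ite_eq Finset.univ i (fun _ => (1:ℝ))]
        simp
        linarith
    _ = 2 * ∑ i, s i := by rw [← Finset.sum_mul, mul_comm]
    _ ≤ 2 := by linarith
end

section
/- For all vectors x, y ∈ ℝ^M, Softmax₁ satisfies the ℓ₁–ℓ∞ Lipschitz bound ∑_{i=1}^M |[Softmax₁(x)]_i − [Softmax₁(y)]_i| ≤ 2 · max_{i ∈ [M]} |x_i − y_i|. -/
open Real
open scoped BigOperators

lemma tanh_aux (t : ℝ) (ht : 0 ≤ t) :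
    1 - Real.exp (-(2*t)) ≤ t * (1 + Real.exp (-(2*t))) := by
  set f : ℝ → ℝ := fun s => s * (1 + Real.exp (-(2*s))) + Real.exp (-(2*s)) - 1 with hf
  have hder : ∀ s : ℝ, HasDerivAt f (1 - Real.exp (-(2*s)) - 2*s*Real.exp (-(2*s))) s := by
    intro s
    have h1 : HasDerivAt (fun s : ℝ => -(2*s)) (-2) s := by
      simpa using ((hasDerivAt_id s).const_mul (-2 : ℝ))
    have h2 : HasDerivAt (fun s : ℝ => Real.exp (-(2*s))) (Real.exp (-(2*s)) * (-2)) s :=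
      h1.exp
    have h3 : HasDerivAt f (1 * (1 + Real.exp (-(2*s))) + s * (Real.exp (-(2*s)) * (-2))
        + Real.exp (-(2*s)) * (-2)) s :=
      (((hasDerivAt_id s).mul (h2.const_add 1)).add h2).sub_const 1
    convert h3 using 1
    ring
  have hdnn : ∀ s : ℝ, 0 < s → 0 ≤ 1 - Real.exp (-(2*s)) - 2*s*Real.exp (-(2*s)) := by
    intro s hs
    have h1 : 2*s + 1 ≤ Real.exp (2*s) := Real.add_one_le_exp _
    have h2 : (0:ℝ) < Real.exp (-(2*s)) := Real.exp_pos _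
    have h3 : Real.exp (-(2*s)) * Real.exp (2*s) = 1 := by
      rw [← Real.exp_add]; simp
    nlinarith [mul_le_mul_of_nonneg_right h1 h2.le]
  have mono : MonotoneOn f (Set.Ici (0:ℝ)) := by
    apply monotoneOn_of_deriv_nonneg (convex_Ici 0)
    · exact Continuous.continuousOn (by fun_prop)
    · intro s hs
      exact (hder s).differentiableAt.differentiableWithinAt
    · intro s hs
      rw [interior_Ici] at hs
      rw [(hder s).deriv]
      exact hdnn s hs
  have h0 : f 0 ≤ f t := mono (by simp) (by simpa using ht) ht
  simp only [hf] at h0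
  norm_num at h0
  linarith

lemma softmax1_ratio {M : ℕ} (x y : Fin M → ℝ) (t : ℝ) (ht : 0 ≤ t)
    (h : ∀ i, |x i - y i| ≤ t) (i : Fin M) :
    Real.exp (-(2*t)) * softmax1 x i ≤ softmax1 y i := by
  have hSx : (0:ℝ) ≤ ∑ μ, Real.exp (x μ) :=
    Finset.sum_nonneg fun μ _ => (Real.exp_pos _).le
  have hB : (0:ℝ) < 1 + ∑ μ, Real.exp (y μ) := by
    have : (0:ℝ) ≤ ∑ μ, Real.exp (y μ) :=
      Finset.sum_nonneg fun μ _ => (Real.exp_pos _).le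
    linarith
  have hden : 1 + ∑ μ, Real.exp (y μ) ≤ Real.exp t * (1 + ∑ μ, Real.exp (x μ)) := by
    have hone : 1 ≤ Real.exp t := Real.one_le_exp ht
    calc 1 + ∑ μ, Real.exp (y μ) ≤ 1 + ∑ μ, Real.exp (t + x μ) := by
          gcongr with μ
          have := abs_le.mp (h μ)
          linarith
      _ = 1 + Real.exp t * ∑ μ, Real.exp (x μ) := by
          simp [Real.exp_add, Finset.mul_sum]
      _ ≤ Real.exp t * (1 + ∑ μ, Real.exp (x μ)) := by nlinarith
  have hnum : Real.exp (-t) * Real.exp (x i) ≤ Real.exp (y i) := by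
    rw [← Real.exp_add]
    have := abs_le.mp (h i)
    exact Real.exp_le_exp.mpr (by linarith)
  have key : (Real.exp (-t) * Real.exp (x i)) / (Real.exp t * (1 + ∑ μ, Real.exp (x μ)))
      ≤ Real.exp (y i) / (1 + ∑ μ, Real.exp (y μ)) :=
    div_le_div₀ (Real.exp_pos _).le hnum hB hden
  calc Real.exp (-(2*t)) * softmax1 x i
      = (Real.exp (-t) * Real.exp (x i)) / (Real.exp t * (1 + ∑ μ, Real.exp (x μ))) := by
        unfold softmax1
        rw [show Real.exp (-(2*t)) = Real.exp (-t) / Real.exp t by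
          rw [← Real.exp_sub]; ring_nf]
        rw [div_mul_div_comm]
    _ ≤ Real.exp (y i) / (1 + ∑ μ, Real.exp (y μ)) := key
    _ = softmax1 y i := rfl

/-- For all `x, y ∈ ℝ^M`, `Softmax₁` satisfies the `ℓ₁`–`ℓ∞` Lipschitz bound
`∑_i |[Softmax₁(x)]_i − [Softmax₁(y)]_i| ≤ 2 · max_i |x_i − y_i|`. -/
theorem stmt15 (M : ℕ) (hM : 0 < M) (x y : Fin M → ℝ) :
    ∑ i, |softmax1 x i - softmax1 y i| ≤
      2 * Finset.univ.sup' (Finset.univ_nonempty_iff.mpr ⟨⟨0, hM⟩⟩)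
        (fun i => |x i - y i|) := by
  set t := Finset.univ.sup' (Finset.univ_nonempty_iff.mpr ⟨⟨0, hM⟩⟩)
      (fun i => |x i - y i|) with htdef
  have hxy : ∀ i, |x i - y i| ≤ t := fun i => by
    rw [htdef]; exact Finset.le_sup' (fun i => |x i - y i|) (Finset.mem_univ i)
  have ht : 0 ≤ t := le_trans (abs_nonneg _) (hxy ⟨0, hM⟩)
  have hyx : ∀ i, |y i - x i| ≤ t := fun i => by rw [abs_sub_comm]; exact hxy i
  have h1 := softmax1_ratio x y t ht hxy
  have h2 := softmax1_ratio y x t ht hyx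
  set E := Real.exp (-(2*t)) with hE
  have hE1 : E ≤ 1 := Real.exp_le_one_iff.mpr (by linarith)
  have hE0 : 0 < E := Real.exp_pos _
  -- sums of softmax are at most 1
  have hsum : ∀ z : Fin M → ℝ, ∑ i, softmax1 z i ≤ 1 := by
    intro z
    have hS : (0:ℝ) ≤ ∑ μ, Real.exp (z μ) :=
      Finset.sum_nonneg fun μ _ => (Real.exp_pos _).le
    have hA : (0:ℝ) < 1 + ∑ μ, Real.exp (z μ) := by linarith
    unfold softmax1
    rw [← Finset.sum_div, div_le_one hA]
    linarith
  have hnn : ∀ (z : Fin M → ℝ) i, 0 ≤ softmax1 z i := by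
    intro z i
    have hS : (0:ℝ) ≤ ∑ μ, Real.exp (z μ) :=
      Finset.sum_nonneg fun μ _ => (Real.exp_pos _).le
    unfold softmax1
    positivity
  -- pointwise bound
  have hpt : ∀ i, |softmax1 x i - softmax1 y i| ≤
      (1 - E) * (softmax1 x i + softmax1 y i + |softmax1 x i - softmax1 y i|) / 2 := by
    intro i
    have h1i := h1 i
    have h2i := h2 i
    have := hnn x i
    have := hnn y i
    rcases abs_cases (softmax1 x i - softmax1 y i) with ⟨he, hc⟩ | ⟨he, hc⟩ <;>
      rw [he] <;> nlinarith
  have hsum1 := hsum x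
  have hsum2 := hsum y
  have hS : ∑ i, |softmax1 x i - softmax1 y i| ≤
      (1 - E) * (2 + ∑ i, |softmax1 x i - softmax1 y i|) / 2 := by
    calc ∑ i, |softmax1 x i - softmax1 y i|
        ≤ ∑ i, (1 - E) * (softmax1 x i + softmax1 y i + |softmax1 x i - softmax1 y i|) / 2 :=
          Finset.sum_le_sum fun i _ => hpt i
      _ = (1 - E) * ((∑ i, softmax1 x i) + (∑ i, softmax1 y i)
            + ∑ i, |softmax1 x i - softmax1 y i|) / 2 := by
          rw [← Finset.sum_add_distrib, ← Finset.sum_add_distrib, Finset.mul_sum,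
            Finset.sum_div]
      _ ≤ (1 - E) * (2 + ∑ i, |softmax1 x i - softmax1 y i|) / 2 := by
          have : (0:ℝ) ≤ 1 - E := by linarith
          gcongr
          linarith
  have htanh : 1 - E ≤ t * (1 + E) := tanh_aux t ht
  nlinarith [hS, htanh, Finset.sum_nonneg (fun i (_ : i ∈ Finset.univ) =>
    abs_nonneg (softmax1 x i - softmax1 y i))]
end

section
/- Let y_1, …, y_M ∈ ℝ^a with ‖y_t‖ ≤ B_Y for all t ∈ [M], arranged as rows of Y ∈ ℝ^{M×a}, let q ∈ ℝ^d, let β > 0, and let W_K, W_K' ∈ ℝ^{a×d} and W_V, W_V' ∈ ℝ^{a×d} with the operator norm bound ‖W_Vᵀ‖₂ ≤ B_V. Define f(W_K, W_V) := W_Vᵀ Yᵀ Softmax₁(β Y W_K q) ∈ ℝ^d. Then ‖f(W_K, W_V) − f(W_K', W_V')‖ ≤ 2 B_V B_Y · max_{t ∈ [M]} |β⟨y_t, (W_K − W_K') q⟩| + max_{t ∈ [M]} ‖(W_V − W_V')ᵀ y_t‖, where ‖·‖ denotes the Euclidean norm on vectors. -/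
open Real
open scoped BigOperators RealInnerProductSpace

lemma softmax1_denom_pos {M : ℕ} (z : Fin M → ℝ) : 0 < 1 + ∑ μ, Real.exp (z μ) := by
  have : 0 ≤ ∑ μ, Real.exp (z μ) :=
    Finset.sum_nonneg fun μ _ => (Real.exp_pos _).le
  linarith

lemma softmax1_nonneg {M : ℕ} (z : Fin M → ℝ) (ν : Fin M) : 0 ≤ softmax1 z ν :=
  div_nonneg (Real.exp_pos _).le (softmax1_denom_pos z).le

lemma softmax1_sum_le_one {M : ℕ} (z : Fin M → ℝ) : ∑ ν, softmax1 z ν ≤ 1 := by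
  unfold softmax1
  rw [← Finset.sum_div, div_le_one (softmax1_denom_pos z)]
  linarith [softmax1_denom_pos z]

/-- Key Lipschitz estimate for softmax1-weighted sums, proved by the mean value theorem. -/
lemma div_sq_aux (e dlt D T : ℝ) (hD : D ≠ 0) :
    (e * dlt * D - e * T) / D ^ 2 = e / D * (dlt - T / D) := by
  field_simp

lemma softmax1_smul_lipschitz {M : ℕ} (hM : 0 < M) {E : Type*} [NormedAddCommGroup E]
    [NormedSpace ℝ E] (z z' : Fin M → ℝ) (v : Fin M → E) (B ε : ℝ)
    (hv : ∀ t, ‖v t‖ ≤ B) (hε : ∀ t, |z t - z' t| ≤ ε) :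
    ‖(∑ t, softmax1 z t • v t) - ∑ t, softmax1 z' t • v t‖ ≤ 2 * ε * B := by
  have hB : 0 ≤ B := le_trans (norm_nonneg _) (hv ⟨0, hM⟩)
  have hε0 : 0 ≤ ε := le_trans (abs_nonneg _) (hε ⟨0, hM⟩)
  set δ : Fin M → ℝ := fun t => z t - z' t with hδ
  set u : ℝ → Fin M → ℝ := fun s μ => z' μ + s * δ μ with hu
  set g : ℝ → E := fun s => ∑ t, softmax1 (u s) t • v t with hg
  set g' : ℝ → E := fun s => ∑ ν,
    ((Real.exp (u s ν) * δ ν * (1 + ∑ μ, Real.exp (u s μ)) -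
      Real.exp (u s ν) * (∑ μ, Real.exp (u s μ) * δ μ)) /
      (1 + ∑ μ, Real.exp (u s μ)) ^ 2) • v ν with hg'
  have hexp : ∀ s : ℝ, ∀ ν : Fin M,
      HasDerivAt (fun s : ℝ => Real.exp (u s ν)) (Real.exp (u s ν) * δ ν) s := by
    intro s ν
    have h1 : HasDerivAt (fun s : ℝ => z' ν + s * δ ν) (δ ν) s := by
      simpa using ((hasDerivAt_id s).mul_const (δ ν)).const_add (z' ν)
    simpa [hu] using h1.exp
  have hderiv : ∀ s : ℝ, HasDerivAt g (g' s) s := by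
    intro s
    apply HasDerivAt.fun_sum
    intro ν _
    have hD : HasDerivAt (fun s : ℝ => 1 + ∑ μ, Real.exp (u s μ))
        (∑ μ, Real.exp (u s μ) * δ μ) s := by
      exact (HasDerivAt.fun_sum fun μ _ => hexp s μ).const_add 1
    have hq := (hexp s ν).div hD (ne_of_gt (softmax1_denom_pos (u s)))
    exact hq.smul_const (v ν)
  have hbound : ∀ s : ℝ, ‖g' s‖ ≤ 2 * ε * B := by
    intro s
    set D : ℝ := 1 + ∑ μ, Real.exp (u s μ) with hDdef
    have hDpos : 0 < D := softmax1_denom_pos (u s)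
    set T : ℝ := ∑ μ, Real.exp (u s μ) * δ μ with hT
    have hTabs : |T| ≤ ε * D := by
      calc |T| ≤ ∑ μ, |Real.exp (u s μ) * δ μ| := Finset.abs_sum_le_sum_abs _ _
        _ ≤ ∑ μ, Real.exp (u s μ) * ε := by
            apply Finset.sum_le_sum
            intro μ _
            rw [abs_mul, abs_of_pos (Real.exp_pos _)]
            exact mul_le_mul_of_nonneg_left (hε μ) (Real.exp_pos _).le
        _ = (∑ μ, Real.exp (u s μ)) * ε := by rw [← Finset.sum_mul]
        _ ≤ D * ε := mul_le_mul_of_nonneg_right (by rw [hDdef]; linarith) hε0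
        _ = ε * D := by ring
    calc ‖g' s‖ ≤ ∑ ν, ‖((Real.exp (u s ν) * δ ν * D - Real.exp (u s ν) * T) / D ^ 2) • v ν‖ :=
          norm_sum_le _ _
      _ ≤ ∑ ν, softmax1 (u s) ν * (2 * ε) * B := by
          apply Finset.sum_le_sum
          intro ν _
          rw [norm_smul, Real.norm_eq_abs]
          have hsm : softmax1 (u s) ν = Real.exp (u s ν) / D := rfl
          rw [div_sq_aux _ _ _ _ (ne_of_gt hDpos), ← hsm, abs_mul,
            abs_of_nonneg (softmax1_nonneg _ _)]
          have h1 : |δ ν - T / D| ≤ 2 * ε := by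
            have h2 : |T / D| ≤ ε := by
              rw [abs_div, abs_of_pos hDpos, div_le_iff₀ hDpos]
              linarith [hTabs]
            calc |δ ν - T / D| ≤ |δ ν| + |T / D| := abs_sub _ _
              _ ≤ ε + ε := add_le_add (hε ν) h2
              _ = 2 * ε := by ring
          exact mul_le_mul (mul_le_mul_of_nonneg_left h1 (softmax1_nonneg (u s) ν))
            (hv ν) (norm_nonneg _) (mul_nonneg (softmax1_nonneg _ _) (by positivity))
      _ = (∑ ν, softmax1 (u s) ν) * (2 * ε * B) := by
          rw [Finset.sum_mul]
          apply Finset.sum_congr rfl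
          intro ν _
          ring
      _ ≤ 1 * (2 * ε * B) := by
          apply mul_le_mul_of_nonneg_right (softmax1_sum_le_one _) (by positivity)
      _ = 2 * ε * B := one_mul _
  have h01 : ‖g 1 - g 0‖ ≤ 2 * ε * B := by
    apply norm_image_sub_le_of_norm_deriv_le_segment_01' (f' := g')
    · intro x _
      exact (hderiv x).hasDerivWithinAt
    · intro x _
      exact hbound x
  have hg1 : g 1 = ∑ t, softmax1 z t • v t := by
    have : u 1 = z := by funext μ; simp [hu, hδ]
    rw [hg]; simp only [this]
  have hg0 : g 0 = ∑ t, softmax1 z' t • v t := by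
    have : u 0 = z' := by funext μ; simp [hu]
    rw [hg]; simp only [this]
  rwa [hg1, hg0] at h01

/-- Let `y_1, …, y_M ∈ ℝ^a` with `‖y_t‖ ≤ B_Y` (the rows of `Y`), `q ∈ ℝ^d`, `β > 0`,
and `W_K, W_K', W_V, W_V' ∈ ℝ^{a×d}` (viewed as linear maps `ℝ^d → ℝ^a`) with
`‖W_Vᵀ‖₂ ≤ B_V`. Define `f(W_K, W_V) = W_Vᵀ Yᵀ Softmax₁(β Y W_K q)
= ∑_t [Softmax₁(β Y W_K q)]_t • W_Vᵀ y_t ∈ ℝ^d`. Then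
`‖f(W_K, W_V) − f(W_K', W_V')‖ ≤ 2 B_V B_Y · max_t |β⟨y_t, (W_K − W_K') q⟩|
  + max_t ‖(W_V − W_V')ᵀ y_t‖`. -/
theorem stmt17 (a d M : ℕ) (hM : 0 < M) (β : ℝ) (hβ : 0 < β)
    (y : Fin M → EuclideanSpace ℝ (Fin a)) (B_Y B_V : ℝ)
    (hy : ∀ t, ‖y t‖ ≤ B_Y)
    (q : EuclideanSpace ℝ (Fin d))
    (WK WK' WV WV' : EuclideanSpace ℝ (Fin d) →L[ℝ] EuclideanSpace ℝ (Fin a))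
    (hWV : ‖ContinuousLinearMap.adjoint WV‖ ≤ B_V)
    (f : (EuclideanSpace ℝ (Fin d) →L[ℝ] EuclideanSpace ℝ (Fin a)) →
      (EuclideanSpace ℝ (Fin d) →L[ℝ] EuclideanSpace ℝ (Fin a)) →
      EuclideanSpace ℝ (Fin d))
    (hf : ∀ K V, f K V = ∑ t, softmax1 (fun s => β * ⟪y s, K q⟫) t •
      (ContinuousLinearMap.adjoint V) (y t)) :
    ‖f WK WV - f WK' WV'‖ ≤
      2 * B_V * B_Y *
        Finset.univ.sup' (Finset.univ_nonempty_iff.mpr ⟨⟨0, hM⟩⟩)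
          (fun t => |β * ⟪y t, (WK - WK') q⟫|) +
      Finset.univ.sup' (Finset.univ_nonempty_iff.mpr ⟨⟨0, hM⟩⟩)
        (fun t => ‖(ContinuousLinearMap.adjoint (WV - WV')) (y t)‖) := by
  have hne : (Finset.univ : Finset (Fin M)).Nonempty := Finset.univ_nonempty_iff.mpr ⟨⟨0, hM⟩⟩
  set A := ContinuousLinearMap.adjoint WV with hA
  set A' := ContinuousLinearMap.adjoint WV' with hA'
  set Ad := ContinuousLinearMap.adjoint (WV - WV') with hAd
  have hAdiff : Ad = A - A' := map_sub (ContinuousLinearMap.adjoint :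
    (EuclideanSpace ℝ (Fin d) →L[ℝ] EuclideanSpace ℝ (Fin a)) ≃ₗᵢ⋆[ℝ] _) WV WV'
  set zK : Fin M → ℝ := fun s => β * ⟪y s, WK q⟫ with hzK
  set zK' : Fin M → ℝ := fun s => β * ⟪y s, WK' q⟫ with hzK'
  set ε : ℝ := Finset.univ.sup' (Finset.univ_nonempty_iff.mpr ⟨⟨0, hM⟩⟩)
    (fun t => |β * ⟪y t, (WK - WK') q⟫|) with hεdef
  set Es : ℝ := Finset.univ.sup' (Finset.univ_nonempty_iff.mpr ⟨⟨0, hM⟩⟩)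
    (fun t => ‖ContinuousLinearMap.adjoint (WV - WV') (y t)‖) with hEsdef
  have hdelta : ∀ t, β * ⟪y t, (WK - WK') q⟫ = zK t - zK' t := by
    intro t
    simp only [hzK, hzK', ContinuousLinearMap.sub_apply, inner_sub_right]
    ring
  have hε : ∀ t, |zK t - zK' t| ≤ ε := by
    intro t
    rw [← hdelta t]
    exact Finset.le_sup' (fun t => |β * ⟪y t, (WK - WK') q⟫|) (Finset.mem_univ t)
  have hEsle : ∀ t, ‖Ad (y t)‖ ≤ Es := fun t =>
    Finset.le_sup' (fun t => ‖ContinuousLinearMap.adjoint (WV - WV') (y t)‖) (Finset.mem_univ t)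
  have hEs0 : 0 ≤ Es := le_trans (norm_nonneg _) (hEsle ⟨0, hM⟩)
  have hsplit : f WK WV - f WK' WV' =
      ((∑ t, softmax1 zK t • A (y t)) - ∑ t, softmax1 zK' t • A (y t)) +
        ∑ t, softmax1 zK' t • Ad (y t) := by
    rw [hf, hf]
    rw [hAdiff]
    simp only [ContinuousLinearMap.sub_apply, smul_sub, Finset.sum_sub_distrib]
    abel
  rw [hsplit]
  have hv : ∀ t, ‖A (y t)‖ ≤ B_V * B_Y := by
    intro t
    calc ‖A (y t)‖ ≤ ‖A‖ * ‖y t‖ := A.le_opNorm _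
      _ ≤ B_V * B_Y := mul_le_mul hWV (hy t) (norm_nonneg _) (le_trans (norm_nonneg _) hWV)
  have h1 : ‖(∑ t, softmax1 zK t • A (y t)) - ∑ t, softmax1 zK' t • A (y t)‖ ≤
      2 * ε * (B_V * B_Y) :=
    softmax1_smul_lipschitz hM zK zK' (fun t => A (y t)) (B_V * B_Y) ε hv hε
  have h2 : ‖∑ t, softmax1 zK' t • Ad (y t)‖ ≤ Es := by
    calc ‖∑ t, softmax1 zK' t • Ad (y t)‖ ≤ ∑ t, ‖softmax1 zK' t • Ad (y t)‖ :=
          norm_sum_le _ _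
      _ ≤ ∑ t, softmax1 zK' t * Es := by
          apply Finset.sum_le_sum
          intro t _
          rw [norm_smul, Real.norm_eq_abs, abs_of_nonneg (softmax1_nonneg _ _)]
          exact mul_le_mul_of_nonneg_left (hEsle t) (softmax1_nonneg _ _)
      _ = (∑ t, softmax1 zK' t) * Es := by rw [← Finset.sum_mul]
      _ ≤ 1 * Es := mul_le_mul_of_nonneg_right (softmax1_sum_le_one _) hEs0
      _ = Es := one_mul _
  calc ‖((∑ t, softmax1 zK t • A (y t)) - ∑ t, softmax1 zK' t • A (y t)) +
        ∑ t, softmax1 zK' t • Ad (y t)‖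
      ≤ ‖(∑ t, softmax1 zK t • A (y t)) - ∑ t, softmax1 zK' t • A (y t)‖ +
        ‖∑ t, softmax1 zK' t • Ad (y t)‖ := norm_add_le _ _
    _ ≤ 2 * ε * (B_V * B_Y) + Es := add_le_add h1 h2
    _ = 2 * B_V * B_Y * ε + Es := by ring
end
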